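/- Let H be a complex Hilbert space and L, M ⊂ H closed subspaces with corresponding orthogonal projections P_L and P_M. Then ‖P_L − P_M‖ < 1 if and only if M is the graph of a bounded operator K ∈ L(L, L^⊥), i.e. M = {x + Kx : x ∈ L}. In that case ‖K‖ = ‖P_L − P_M‖ / √(1 − ‖P_L − P_M‖²) and ‖P_L − P_M‖ = ‖K‖ / √(1 + ‖K‖²). -/

import Mathlib

/-!
STATEMENT 5: For closed subspaces `L, M` of a complex Hilbert space `H` with orthogonal
projections `P_L, P_M`, one has `‖P_L - P_M‖ < 1` iff `M` is the graph
`{x + Kx : x ∈ L}` of a bounded operator `K ∈ L(L, L^⊥)`; in that case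
`‖K‖ = ‖P_L - P_M‖/√(1 - ‖P_L - P_M‖²)` and `‖P_L - P_M‖ = ‖K‖/√(1 + ‖K‖²)`.
-/

noncomputable section

set_option maxHeartbeats 1000000
set_option linter.unusedVariables false
set_option linter.unusedSectionVars false

open Submodule ContinuousLinearMap

local notation "⟪" x ", " y "⟫" => @inner ℂ _ _ x y

section Aux

variable {H : Type*} [NormedAddCommGroup H] [InnerProductSpace ℂ H] [CompleteSpace H]
variable {L M : Submodule ℂ H} [CompleteSpace L] [CompleteSpace M]

private lemma st5_le_of_sq_le_sq {a b : ℝ} (ha : 0 ≤ a) (hb : 0 ≤ b) (h : a ^ 2 ≤ b ^ 2) :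
    a ≤ b := by nlinarith [sq_nonneg (a - b), sq_nonneg (a + b)]

private lemma st5_pyth2 {a b : H} (h : ⟪a, b⟫ = 0) : ‖a + b‖ ^ 2 = ‖a‖ ^ 2 + ‖b‖ ^ 2 := by
  have := norm_add_sq_eq_norm_sq_add_norm_sq_of_inner_eq_zero a b h
  nlinarith [this]

private lemma st5_pyth_proj (N : Submodule ℂ H) [CompleteSpace N] (z : H) :
    ‖z‖ ^ 2 = ‖(orthogonalProjection N z : H)‖ ^ 2 + ‖z - orthogonalProjection N z‖ ^ 2 := by
  have h0 : (⟪((orthogonalProjection N z : H)), z - orthogonalProjection N z⟫) = 0 :=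
    inner_right_of_mem_orthogonal (coe_mem _) (sub_starProjection_mem_orthogonal z)
  have h := st5_pyth2 h0
  have hz : (orthogonalProjection N z : H) + (z - orthogonalProjection N z) = z := by abel
  rw [hz] at h
  linarith

variable {L M : Submodule ℂ H} [CompleteSpace L] [CompleteSpace M]

private lemma st5_proj_graph (K : L →L[ℂ] Lᗮ) (x : L) :
    (orthogonalProjection L ((x : H) + (K x : H)) : H) = (x : H) := by
  rw [map_add, orthogonalProjection_mem_subspace_eq_self,
    orthogonalProjection_mem_subspace_orthogonalComplement_eq_zero (K x).2]
  simp

private lemma st5_pointwise (K : L →L[ℂ] Lᗮ)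
    (hK : (M : Set H) = {z : H | ∃ x : L, z = (x : H) + (K x : H)}) (z : H) :
    ‖(orthogonalProjection L z : H) - (orthogonalProjection M z : H)‖ ^ 2 * (1 + ‖K‖ ^ 2)
      ≤ ‖K‖ ^ 2 * ‖z‖ ^ 2 := by
  set c := ‖K‖ with hc
  have hc0 : 0 ≤ c := norm_nonneg K
  set u : H := (orthogonalProjection M z : H) with hu
  set v : H := z - u with hv
  obtain ⟨x, hx⟩ : ∃ x : L, u = (x : H) + (K x : H) := by
    have h : u ∈ (M : Set H) := (orthogonalProjection M z).2
    rwa [hK] at h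
  have hPu : (orthogonalProjection L u : H) = (x : H) := by rw [hx]; exact st5_proj_graph K x
  have hKx : ‖(K x : H)‖ ≤ c * ‖(x : H)‖ := by
    have h := K.le_opNorm x
    rwa [Submodule.coe_norm, Submodule.coe_norm] at h
  have hu_sq : ‖u‖ ^ 2 = ‖(x : H)‖ ^ 2 + ‖(K x : H)‖ ^ 2 := by
    rw [hx]; exact st5_pyth2 (inner_right_of_mem_orthogonal x.2 (K x).2)
  have hpiece1 : ‖u - (orthogonalProjection L u : H)‖ ^ 2 * (1 + c ^ 2) ≤ c ^ 2 * ‖u‖ ^ 2 := by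
    have h : u - (orthogonalProjection L u : H) = (K x : H) := by rw [hPu, hx]; abel
    rw [h, hu_sq]
    nlinarith [norm_nonneg ((x : H)), norm_nonneg ((K x : H))]
  have hvM : v ∈ Mᗮ := sub_starProjection_mem_orthogonal z
  set p : L := orthogonalProjection L v with hp
  set q : H := v - p with hq'
  have hq : q ∈ Lᗮ := sub_starProjection_mem_orthogonal v
  have hmemM : ((p : H) + (K p : H)) ∈ M := by
    have : ((p : H) + (K p : H)) ∈ (M : Set H) := by rw [hK]; exact ⟨p, rfl⟩
    exact this
  have h0 : (⟪(p : H) + (K p : H), v⟫) = 0 :=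
    inner_right_of_mem_orthogonal hmemM hvM
  have hvpq : v = (p : H) + q := by rw [hq']; abel
  have hexp : (⟪(p : H) + (K p : H), (p : H) + q⟫) = ⟪(p : H), (p : H)⟫ + ⟪(K p : H), q⟫ := by
    rw [inner_add_left, inner_add_right, inner_add_right,
      inner_right_of_mem_orthogonal p.2 hq, inner_left_of_mem_orthogonal p.2 (K p).2]
    ring
  have h3 : (⟪(p : H), (p : H)⟫) = -⟪(K p : H), q⟫ := by
    rw [hvpq, hexp] at h0; linear_combination h0
  have h5 : ‖(⟪(p : H), (p : H)⟫)‖ ≤ ‖(K p : H)‖ * ‖q‖ := by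
    rw [h3, norm_neg]; exact norm_inner_le_norm _ _
  have h6 : ‖(⟪(p : H), (p : H)⟫)‖ = ‖(p : H)‖ ^ 2 := by
    rw [@inner_self_eq_norm_sq_to_K ℂ]
    simp [pow_two]
  have hKp : ‖(K p : H)‖ ≤ c * ‖(p : H)‖ := by
    have h := K.le_opNorm p
    rwa [Submodule.coe_norm, Submodule.coe_norm] at h
  have hpq2 : ‖(p : H)‖ ^ 2 ≤ c ^ 2 * ‖q‖ ^ 2 := by
    rw [h6] at h5
    nlinarith [sq_nonneg (‖(p : H)‖ - c * ‖q‖), norm_nonneg q, norm_nonneg ((p : H)),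
      norm_nonneg ((K p : H))]
  have hv_sq : ‖v‖ ^ 2 = ‖(p : H)‖ ^ 2 + ‖q‖ ^ 2 := by
    rw [hvpq]; exact st5_pyth2 (inner_right_of_mem_orthogonal p.2 hq)
  have hpiece2 : ‖(orthogonalProjection L v : H)‖ ^ 2 * (1 + c ^ 2) ≤ c ^ 2 * ‖v‖ ^ 2 := by
    rw [hv_sq]; nlinarith [hpq2]
  have hzuv : z = u + v := by rw [hv]; abel
  have hsplit : (orthogonalProjection L z : H) - u
      = (orthogonalProjection L v : H) + -(u - (orthogonalProjection L u : H)) := by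
    have h := congrArg (fun w => ((orthogonalProjection L w : H))) hzuv
    simp only [map_add, Submodule.coe_add] at h
    rw [h]; abel
  have hw_sq : ‖(orthogonalProjection L z : H) - u‖ ^ 2
      = ‖(orthogonalProjection L v : H)‖ ^ 2 + ‖u - (orthogonalProjection L u : H)‖ ^ 2 := by
    rw [hsplit, st5_pyth2 (a := (orthogonalProjection L v : H)) (b := -(u - (orthogonalProjection L u : H))) (inner_right_of_mem_orthogonal (orthogonalProjection L v).2
      (Submodule.neg_mem _ (sub_starProjection_mem_orthogonal u : u - (orthogonalProjection L u : H) ∈ Lᗮ))), norm_neg]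
  have hz_sq : ‖z‖ ^ 2 = ‖u‖ ^ 2 + ‖v‖ ^ 2 := st5_pyth_proj M z
  rw [hw_sq, hz_sq]
  nlinarith [hpiece1, hpiece2]


private lemma st5_upper (K : L →L[ℂ] Lᗮ)
    (hK : (M : Set H) = {z : H | ∃ x : L, z = (x : H) + (K x : H)}) :
    ‖L.subtypeL ∘L orthogonalProjection L - M.subtypeL ∘L orthogonalProjection M‖
      ≤ ‖K‖ / Real.sqrt (1 + ‖K‖ ^ 2) := by
  set c := ‖K‖ with hc
  have hc0 : 0 ≤ c := norm_nonneg K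
  have hpos : (0 : ℝ) < 1 + c ^ 2 := by positivity
  have hspos : (0 : ℝ) < Real.sqrt (1 + c ^ 2) := Real.sqrt_pos.mpr hpos
  have hsq : Real.sqrt (1 + c ^ 2) ^ 2 = 1 + c ^ 2 := Real.sq_sqrt hpos.le
  apply opNorm_le_bound _ (div_nonneg hc0 hspos.le)
  intro z
  have happ : (L.subtypeL ∘L orthogonalProjection L - M.subtypeL ∘L orthogonalProjection M) z
      = (orthogonalProjection L z : H) - (orthogonalProjection M z : H) := rfl
  rw [happ, div_mul_eq_mul_div, le_div_iff₀ hspos]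
  have hpt := st5_pointwise K hK z
  apply st5_le_of_sq_le_sq (by positivity) (by positivity)
  rw [mul_pow, mul_pow, hsq]
  nlinarith [hpt]

private lemma st5_lt_one (c : ℝ) (hc : 0 ≤ c) : c / Real.sqrt (1 + c ^ 2) < 1 := by
  have hpos : (0 : ℝ) < 1 + c ^ 2 := by positivity
  have hspos : (0 : ℝ) < Real.sqrt (1 + c ^ 2) := Real.sqrt_pos.mpr hpos
  rw [div_lt_one hspos]
  have : c = Real.sqrt (c ^ 2) := (Real.sqrt_sq hc).symm
  rw [this]
  exact Real.sqrt_lt_sqrt (by positivity) (by nlinarith)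


private lemma st5_exists
    (hd : ‖L.subtypeL ∘L orthogonalProjection L - M.subtypeL ∘L orthogonalProjection M‖ < 1) :
    ∃ K : L →L[ℂ] Lᗮ, (M : Set H) = {z : H | ∃ x : L, z = (x : H) + (K x : H)} := by
  set D := L.subtypeL ∘L orthogonalProjection L - M.subtypeL ∘L orthogonalProjection M with hD
  set d := ‖D‖ with hdn
  have hd0 : 0 ≤ d := norm_nonneg D
  have hs : (0 : ℝ) < 1 - d ^ 2 := by nlinarith
  set s := Real.sqrt (1 - d ^ 2) with hsdef
  have hspos : 0 < s := Real.sqrt_pos.mpr hs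
  have hssq : s ^ 2 = 1 - d ^ 2 := Real.sq_sqrt hs.le
  -- lower bound for projection of elements of M onto L
  have hMlow : ∀ m : H, m ∈ M → (1 - d ^ 2) * ‖m‖ ^ 2 ≤ ‖(orthogonalProjection L m : H)‖ ^ 2 := by
    intro m hm
    have hQm : (orthogonalProjection M m : H) = m := starProjection_eq_self_iff.mpr hm
    have h1 : ‖(orthogonalProjection L m : H) - m‖ ≤ d * ‖m‖ := by
      have h := D.le_opNorm m
      have happ : D m = (orthogonalProjection L m : H) - m := by
        rw [hD]; simp only [sub_apply, comp_apply, Submodule.subtypeL_apply]; rw [hQm]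
      rwa [happ] at h
    have h2 := st5_pyth_proj L m
    have h3 : ‖m - (orthogonalProjection L m : H)‖ = ‖(orthogonalProjection L m : H) - m‖ :=
      norm_sub_rev _ _
    nlinarith [norm_nonneg m, norm_nonneg ((orthogonalProjection L m : H) - m)]
  have hLlow : ∀ x : H, x ∈ L → (1 - d ^ 2) * ‖x‖ ^ 2 ≤ ‖(orthogonalProjection M x : H)‖ ^ 2 := by
    intro x hx
    have hPx : (orthogonalProjection L x : H) = x := starProjection_eq_self_iff.mpr hx
    have h1 : ‖x - (orthogonalProjection M x : H)‖ ≤ d * ‖x‖ := by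
      have h := D.le_opNorm x
      have happ : D x = x - (orthogonalProjection M x : H) := by
        rw [hD]; simp only [sub_apply, comp_apply, Submodule.subtypeL_apply]; rw [hPx]
      rwa [happ] at h
    have h2 := st5_pyth_proj M x
    nlinarith [norm_nonneg x, norm_nonneg (x - (orthogonalProjection M x : H))]
  set A : M →L[ℂ] L := (orthogonalProjection L).comp M.subtypeL with hA
  have hAapp : ∀ m : M, ((A m : H)) = (orthogonalProjection L (m : H) : H) := fun m => rfl
  have hAnorm : ∀ m : M, s * ‖m‖ ≤ ‖A m‖ := by
    intro m
    have h := hMlow (m : H) m.2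
    have hnc : ‖A m‖ = ‖(orthogonalProjection L (m : H) : H)‖ := by
      rw [Submodule.coe_norm, hAapp]
    have hmn : ‖(m : H)‖ = ‖m‖ := (Submodule.coe_norm m).symm
    apply st5_le_of_sq_le_sq (by positivity) (norm_nonneg _)
    rw [mul_pow, hssq, hnc]
    rw [hmn] at h
    exact h
  have hinj : LinearMap.ker (A : M →ₗ[ℂ] L) = ⊥ := by
    rw [LinearMap.ker_eq_bot']
    intro m hm
    have := hAnorm m
    rw [show A m = 0 from hm] at this
    simp only [norm_zero] at this
    have : ‖m‖ ≤ 0 := by nlinarith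
    simpa [norm_le_zero_iff] using this
  have hanti : AntilipschitzWith (⟨s, hspos.le⟩ : NNReal)⁻¹ A := by
    apply A.antilipschitz_of_bound
    intro m
    have h := hAnorm m
    erw [NNReal.coe_inv]
    rw [le_inv_mul_iff₀ (by exact_mod_cast hspos)]
    exact_mod_cast h
  have hclosed : IsClosed (Set.range A) := hanti.isClosed_range A.uniformContinuous
  have hrange : LinearMap.range (A : M →ₗ[ℂ] L) = ⊤ := by
    have hSc : IsClosed ((LinearMap.range (A : M →ₗ[ℂ] L) : Submodule ℂ L) : Set L) := by
      have : ((LinearMap.range (A : M →ₗ[ℂ] L) : Submodule ℂ L) : Set L) = Set.range A := by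
        ext y; simp [LinearMap.mem_range]
      rw [this]; exact hclosed
    haveI : CompleteSpace (LinearMap.range (A : M →ₗ[ℂ] L) : Submodule ℂ L) := hSc.completeSpace_coe
    rw [← Submodule.orthogonal_eq_bot_iff]
    rw [Submodule.eq_bot_iff]
    intro x hx
    have hx' : ∀ m : M, (⟪(A m : L), x⟫) = 0 := fun m =>
      (Submodule.mem_orthogonal _ x).mp hx _ ⟨m, rfl⟩
    have hxM : (x : H) ∈ Mᗮ := by
      rw [Submodule.mem_orthogonal]
      intro u hu
      have h := hx' ⟨u, hu⟩
      rw [Submodule.coe_inner] at h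
      rw [hAapp] at h
      erw [inner_starProjection_left_eq_right] at h
      rwa [starProjection_eq_self_iff.mpr x.2] at h
    have hQx : orthogonalProjection M (x : H) = 0 :=
      orthogonalProjection_mem_subspace_orthogonalComplement_eq_zero hxM
    have h := hLlow (x : H) x.2
    rw [hQx] at h
    simp only [Submodule.coe_zero, norm_zero] at h
    have h' : (1 - d ^ 2) * ‖(x : H)‖ ^ 2 ≤ 0 := by nlinarith [h]
    have h2 : ‖(x : H)‖ ^ 2 ≤ 0 := by nlinarith [hs, h']
    have hx0 : ‖(x : H)‖ = 0 := by nlinarith [norm_nonneg (x : H), sq_nonneg ‖(x : H)‖]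
    have : (x : H) = 0 := norm_eq_zero.mp hx0
    exact_mod_cast this
  set e := ContinuousLinearEquiv.ofBijective A hinj hrange with he
  have heapp : ∀ m : M, e m = A m := fun m => rfl
  refine ⟨((orthogonalProjection Lᗮ).comp M.subtypeL).comp (e.symm : L →L[ℂ] M), ?_⟩
  ext z
  simp only [Set.mem_setOf_eq, SetLike.mem_coe, comp_apply, ContinuousLinearEquiv.coe_coe,
    Submodule.subtypeL_apply]
  constructor
  · intro hz
    refine ⟨e ⟨z, hz⟩, ?_⟩
    rw [e.symm_apply_apply]
    rw [heapp]
    have : ((A ⟨z, hz⟩ : L) : H) = (orthogonalProjection L z : H) := rfl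
    rw [this]
    have h2 : ((orthogonalProjection Lᗮ ((⟨z, hz⟩ : M) : H) : H)) = (orthogonalProjection Lᗮ z : H) := rfl
    rw [h2]
    exact (starProjection_add_starProjection_orthogonal (K := L) z).symm
  · rintro ⟨x, rfl⟩
    set m := e.symm x with hm
    have hAm : ((A m : L) : H) = (x : H) := by
      have : A m = x := by
        have := e.apply_symm_apply x
        rw [← heapp m, hm]; exact this
      exact_mod_cast congrArg (Subtype.val) this
    have hsum : ((orthogonalProjection L (m : H) : H)) + ((orthogonalProjection Lᗮ ((m : H)) : H)) = (m : H) :=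
      starProjection_add_starProjection_orthogonal (K := L) (m : H)
    have hAm' : ((orthogonalProjection L (m : H) : H)) = (x : H) := hAm
    have : (x : H) + ((orthogonalProjection Lᗮ ((m : H)) : H)) = (m : H) := by
      rw [← hAm']; exact hsum
    rw [this]
    exact m.2


end Aux

theorem statement_5 {H : Type*} [NormedAddCommGroup H] [InnerProductSpace ℂ H]
    [CompleteSpace H] (L M : Submodule ℂ H) [CompleteSpace L] [CompleteSpace M]
    (PL PM : H →L[ℂ] H)
    (hPL : PL = L.subtypeL ∘L L.orthogonalProjectionOnto)
    (hPM : PM = M.subtypeL ∘L M.orthogonalProjectionOnto) :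
    (‖PL - PM‖ < 1 ↔
      ∃ K : L →L[ℂ] Lᗮ, (M : Set H) = {z : H | ∃ x : L, z = (x : H) + (K x : H)}) ∧
    ∀ K : L →L[ℂ] Lᗮ, (M : Set H) = {z : H | ∃ x : L, z = (x : H) + (K x : H)} →
      ‖K‖ = ‖PL - PM‖ / Real.sqrt (1 - ‖PL - PM‖ ^ 2) ∧
      ‖PL - PM‖ = ‖K‖ / Real.sqrt (1 + ‖K‖ ^ 2) := by
  subst hPL hPM
  constructor
  · constructor
    · exact st5_exists
    · rintro ⟨K, hK⟩
      exact lt_of_le_of_lt (st5_upper K hK) (st5_lt_one ‖K‖ (norm_nonneg K))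
  · intro K hK
    set D := L.subtypeL ∘L L.orthogonalProjectionOnto - M.subtypeL ∘L M.orthogonalProjectionOnto with hD
    set d := ‖D‖ with hdn
    set c := ‖K‖ with hc
    have hd0 : 0 ≤ d := norm_nonneg D
    have hc0 : 0 ≤ c := norm_nonneg K
    have hub : d ≤ c / Real.sqrt (1 + c ^ 2) := st5_upper K hK
    have hd1 : d < 1 := lt_of_le_of_lt hub (st5_lt_one c hc0)
    have hs : (0 : ℝ) < 1 - d ^ 2 := by nlinarith
    have htpos : (0 : ℝ) < Real.sqrt (1 + c ^ 2) := Real.sqrt_pos.mpr (by positivity)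
    have htsq : Real.sqrt (1 + c ^ 2) ^ 2 = 1 + c ^ 2 := Real.sq_sqrt (by positivity)
    have hspos : (0 : ℝ) < Real.sqrt (1 - d ^ 2) := Real.sqrt_pos.mpr hs
    have hssq : Real.sqrt (1 - d ^ 2) ^ 2 = 1 - d ^ 2 := Real.sq_sqrt hs.le
    -- pointwise lower bound
    have hlow : ∀ x : L, ‖K x‖ ^ 2 * (1 - d ^ 2) ≤ d ^ 2 * ‖x‖ ^ 2 := by
      intro x
      have hm : ((x : H) + (K x : H)) ∈ M := by
        have : ((x : H) + (K x : H)) ∈ (M : Set H) := by rw [hK]; exact ⟨x, rfl⟩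
        exact this
      have hQm : (orthogonalProjection M ((x : H) + (K x : H)) : H) = (x : H) + (K x : H) :=
        starProjection_eq_self_iff.mpr hm
      have happ : D ((x : H) + (K x : H)) = -(K x : H) := by
        rw [hD]
        simp only [sub_apply, comp_apply, Submodule.subtypeL_apply]
        rw [hQm, st5_proj_graph K x]
        abel
      have h1 : ‖(K x : H)‖ ≤ d * ‖(x : H) + (K x : H)‖ := by
        have h := D.le_opNorm ((x : H) + (K x : H))
        rwa [happ, norm_neg] at h
      have h2 : ‖(x : H) + (K x : H)‖ ^ 2 = ‖(x : H)‖ ^ 2 + ‖(K x : H)‖ ^ 2 :=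
        st5_pyth2 (inner_right_of_mem_orthogonal x.2 (K x).2)
      have hnx : ‖(x : H)‖ = ‖x‖ := (Submodule.coe_norm x).symm
      have hnKx : ‖(K x : H)‖ = ‖K x‖ := (Submodule.coe_norm (K x)).symm
      have h1sq : ‖(K x : H)‖ ^ 2 ≤ d ^ 2 * (‖(x : H)‖ ^ 2 + ‖(K x : H)‖ ^ 2) := by
        rw [← h2]
        nlinarith [h1, norm_nonneg ((K x : H)),
          mul_nonneg hd0 (norm_nonneg ((x : H) + (K x : H)))]
      rw [← hnx, ← hnKx]
      linarith [h1sq]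
    have hKb : c ≤ d / Real.sqrt (1 - d ^ 2) := by
      apply opNorm_le_bound _ (div_nonneg hd0 hspos.le)
      intro x
      rw [div_mul_eq_mul_div, le_div_iff₀ hspos]
      apply st5_le_of_sq_le_sq (by positivity) (by positivity)
      rw [mul_pow, mul_pow, hssq]
      nlinarith [hlow x]
    have hub2 : d ^ 2 * (1 + c ^ 2) ≤ c ^ 2 := by
      have h : d * Real.sqrt (1 + c ^ 2) ≤ c := by
        rwa [← le_div_iff₀ htpos]
      nlinarith [h, mul_nonneg hd0 htpos.le, htsq]
    have hKb2 : c ^ 2 * (1 - d ^ 2) ≤ d ^ 2 := by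
      have h : c * Real.sqrt (1 - d ^ 2) ≤ d := by
        rwa [← le_div_iff₀ hspos]
      nlinarith [h, mul_nonneg hc0 hspos.le, hssq]
    have heq1 : d ^ 2 * (1 + c ^ 2) = c ^ 2 := le_antisymm hub2 (by nlinarith [hKb2])
    have heq2 : c ^ 2 * (1 - d ^ 2) = d ^ 2 := by nlinarith [heq1]
    constructor
    · have h : (c * Real.sqrt (1 - d ^ 2)) ^ 2 = d ^ 2 := by rw [mul_pow, hssq]; exact heq2
      have h' : c * Real.sqrt (1 - d ^ 2) = d := by
        have := congrArg Real.sqrt h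
        rwa [Real.sqrt_sq (by positivity), Real.sqrt_sq hd0] at this
      rw [eq_div_iff (ne_of_gt hspos)]
      exact h'
    · have h : (d * Real.sqrt (1 + c ^ 2)) ^ 2 = c ^ 2 := by rw [mul_pow, htsq]; linarith [heq1]
      have h' : d * Real.sqrt (1 + c ^ 2) = c := by
        have := congrArg Real.sqrt h
        rwa [Real.sqrt_sq (by positivity), Real.sqrt_sq hc0] at this
      rw [eq_div_iff (ne_of_gt htpos)]
      exact h'
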